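/- Let k ≥ 1, let λ, μ : ℝ^k → ℝ^k be bounded Lipschitz functions with nonnegative components, and let x : [0,∞) → ℝ^k be the solution of x'(t) = V(x(t)) with x(0) = x⁰ ∈ (0,1)^k, where V is the clamped drift field associated to (λ, μ). Fix a coordinate i ∈ {1,…,k}. If p : [0,∞) → ℝ is differentiable, satisfies the time-dependent linear ODE p'(t) = (1 − p(t)) λ_i(x(t)) − p(t) μ_i(x(t)) for all t ≥ 0, and p(0) equals the i-th coordinate of x⁰, then p(t) equals the i-th coordinate of x(t) for all t ≥ 0. -/

import Mathlib

/-- Clamp a real number to the interval `[0,1]`. -/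
noncomputable def clamp (t : ℝ) : ℝ := min (max t 0) 1

/-- The clamped drift field `V` associated to the pair `(lam, mu)`:
`V_i(x) = (1 − clamp(x_i)) λ_i(x) − clamp(x_i) μ_i(x)`. -/
noncomputable def driftV {k : ℕ} (lam mu : (Fin k → ℝ) → Fin k → ℝ)
    (x : Fin k → ℝ) : Fin k → ℝ :=
  fun i => (1 - clamp (x i)) * lam x i - clamp (x i) * mu x i

/-- Kolmogorov-equation identity: if `p` solves the time-dependent linear ODE
`p' = (1 − p) λ_i(x_t) − p μ_i(x_t)` with `p(0) = (x⁰)_i`, where `x` is the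
solution of `x' = V(x)` with `x(0) = x⁰ ∈ (0,1)^k`, then `p(t) = (x_t)_i` for all
`t ≥ 0`. -/
lemma clamp_lip (a b : ℝ) : |clamp a - clamp b| ≤ |a - b| := by
  unfold clamp
  refine (abs_min_sub_min_le_max _ _ _ _).trans ?_
  simp only [sub_self, abs_zero]
  refine max_le ((abs_max_sub_max_le_max _ _ _ _).trans ?_) (by positivity)
  simp [abs_nonneg]

lemma clamp_of_mem {a : ℝ} (h : a ∈ Set.Icc (0:ℝ) 1) : clamp a = a := by
  unfold clamp
  rw [max_eq_left h.1, min_eq_left h.2]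

/-- Barrier lemma: if `f 0 ≤ c` and `f' t ≤ 0` whenever `f t ≥ c`, then `f ≤ c` on `[0,∞)`. -/
lemma barrier_upper {f f' : ℝ → ℝ} {c : ℝ}
    (hf : ∀ t ∈ Set.Ici (0:ℝ), HasDerivWithinAt f (f' t) (Set.Ici 0) t)
    (h0 : f 0 ≤ c)
    (hc : ∀ t ∈ Set.Ici (0:ℝ), c ≤ f t → f' t ≤ 0) :
    ∀ t ∈ Set.Ici (0:ℝ), f t ≤ c := by
  intro t2 ht2
  by_contra hlt
  push_neg at hlt
  have hcont : ContinuousOn f (Set.Ici 0) := fun t ht => (hf t ht).continuousWithinAt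
  set S : Set ℝ := Set.Icc 0 t2 ∩ f ⁻¹' Set.Iic c with hS
  have hSclosed : IsClosed S :=
    (hcont.mono (Set.Icc_subset_Ici_self)).preimage_isClosed_of_isClosed isClosed_Icc isClosed_Iic
  have hSne : S.Nonempty := ⟨0, ⟨le_refl 0, ht2⟩, h0⟩
  have hSbdd : BddAbove S := ⟨t2, fun t ht => ht.1.2⟩
  set t1 := sSup S with ht1def
  have ht1S : t1 ∈ S := hSclosed.csSup_mem hSne hSbdd
  have ht1nonneg : 0 ≤ t1 := ht1S.1.1
  have ht1le : t1 ≤ t2 := ht1S.1.2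
  have ht1lt : t1 < t2 :=
    ht1le.lt_of_ne (fun h => absurd ht1S.2 (by rw [h]; exact not_le.2 hlt))
  have hgt : ∀ t ∈ Set.Ioc t1 t2, c < f t := by
    intro t ht
    by_contra h
    push_neg at h
    have : t ∈ S := ⟨⟨le_trans ht1nonneg ht.1.le, ht.2⟩, h⟩
    exact absurd (le_csSup hSbdd this) (not_le.2 ht.1)
  have hanti : AntitoneOn f (Set.Icc t1 t2) := by
    have hderiv : ∀ t ∈ Set.Ioo t1 t2, HasDerivAt f (f' t) t := by
      intro t ht
      have htpos : 0 < t := lt_of_le_of_lt ht1nonneg ht.1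
      exact (hf t htpos.le).hasDerivAt (Ici_mem_nhds htpos)
    refine antitoneOn_of_deriv_nonpos (convex_Icc t1 t2)
      (hcont.mono (fun s hs => le_trans ht1nonneg hs.1)) ?_ ?_
    · rw [interior_Icc]
      exact fun t ht => (hderiv t ht).differentiableAt.differentiableWithinAt
    · rw [interior_Icc]
      intro t ht
      rw [(hderiv t ht).deriv]
      exact hc t (le_trans ht1nonneg ht.1.le) (hgt t ⟨ht.1, ht.2.le⟩).le
  have := hanti ⟨le_refl t1, ht1le⟩ ⟨ht1le, le_refl t2⟩ ht1le
  exact absurd (lt_of_lt_of_le hlt (this.trans ht1S.2)) (lt_irrefl c)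

theorem statement2 (k : ℕ) (hk : 1 ≤ k)
    (lam mu : (Fin k → ℝ) → Fin k → ℝ)
    (Klam Kmu : NNReal)
    (hlamLip : LipschitzWith Klam lam) (hmuLip : LipschitzWith Kmu mu)
    (Clam Cmu : ℝ)
    (hlamBdd : ∀ x i, lam x i ≤ Clam) (hmuBdd : ∀ x i, mu x i ≤ Cmu)
    (hlamNonneg : ∀ x i, 0 ≤ lam x i) (hmuNonneg : ∀ x i, 0 ≤ mu x i)
    (x0 : Fin k → ℝ) (hx0 : ∀ i, x0 i ∈ Set.Ioo (0 : ℝ) 1)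
    (x : ℝ → (Fin k → ℝ)) (hxinit : x 0 = x0)
    (hxode : ∀ t ∈ Set.Ici (0 : ℝ),
      HasDerivWithinAt x (driftV lam mu (x t)) (Set.Ici 0) t)
    (i : Fin k)
    (p : ℝ → ℝ)
    (hpode : ∀ t ∈ Set.Ici (0 : ℝ),
      HasDerivWithinAt p ((1 - p t) * lam (x t) i - p t * mu (x t) i) (Set.Ici 0) t)
    (hpinit : p 0 = x0 i) :
    ∀ t ∈ Set.Ici (0 : ℝ), p t = x t i := by
  have hx0i := hx0 i
  -- p stays in [0,1]
  have hp_le : ∀ t ∈ Set.Ici (0:ℝ), p t ≤ 1 := by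
    refine barrier_upper hpode (by rw [hpinit]; exact hx0i.2.le) ?_
    intro t ht hge
    have h1 := hlamNonneg (x t) i
    have h2 := hmuNonneg (x t) i
    nlinarith
  have hp_ge : ∀ t ∈ Set.Ici (0:ℝ), 0 ≤ p t := by
    have := barrier_upper (f := fun t => -p t)
      (f' := fun t => -((1 - p t) * lam (x t) i - p t * mu (x t) i)) (c := 0)
      (fun t ht => (hpode t ht).neg)
      (by simp [hpinit]; exact hx0i.1.le) ?_
    · intro t ht; simpa [neg_nonpos] using this t ht
    · intro t ht hge
      simp only [neg_sub_left, neg_nonpos] at hge ⊢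
      have h1 := hlamNonneg (x t) i
      have h2 := hmuNonneg (x t) i
      nlinarith [neg_nonneg.mp (by linarith : -p t ≥ 0)]
  -- derivative of the i-th coordinate of x
  have hq : ∀ t ∈ Set.Ici (0:ℝ),
      HasDerivWithinAt (fun s => x s i) (driftV lam mu (x t) i) (Set.Ici 0) t := by
    intro t ht
    exact hasDerivWithinAt_pi.1 (hxode t ht) i
  -- Gronwall
  intro t2 ht2
  set g : ℝ → ℝ := fun t => p t - x t i with hg
  set g' : ℝ → ℝ := fun t => (clamp (x t i) - p t) * (lam (x t) i + mu (x t) i) with hg'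
  have hgd : ∀ t ∈ Set.Ico (0:ℝ) t2, HasDerivWithinAt g (g' t) (Set.Ici t) t := by
    intro t ht
    have := ((hpode t ht.1).sub (hq t ht.1)).mono (Set.Ici_subset_Ici.2 ht.1)
    refine this.congr_deriv ?_
    simp only [hg', driftV]
    ring
  have hgcont : ContinuousOn g (Set.Icc 0 t2) := by
    intro t ht
    exact (((hpode t ht.1).sub (hq t ht.1)).continuousWithinAt).mono (Set.Icc_subset_Ici_self)
  have hClam : 0 ≤ Clam := le_trans (hlamNonneg x0 i) (hlamBdd x0 i)
  have hCmu : 0 ≤ Cmu := le_trans (hmuNonneg x0 i) (hmuBdd x0 i)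
  have hbound : ∀ t ∈ Set.Ico (0:ℝ) t2, ‖g' t‖ ≤ (Clam + Cmu) * ‖g t‖ + 0 := by
    intro t ht
    have hp01 : p t ∈ Set.Icc (0:ℝ) 1 := ⟨hp_ge t ht.1, hp_le t ht.1⟩
    have hcl : |clamp (x t i) - p t| ≤ |x t i - p t| := by
      calc |clamp (x t i) - p t| = |clamp (x t i) - clamp (p t)| := by rw [clamp_of_mem hp01]
        _ ≤ |x t i - p t| := clamp_lip _ _
    have hlm : |lam (x t) i + mu (x t) i| ≤ Clam + Cmu := by
      rw [abs_of_nonneg (add_nonneg (hlamNonneg _ _) (hmuNonneg _ _))]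
      exact add_le_add (hlamBdd _ i) (hmuBdd _ i)
    simp only [hg', hg, Real.norm_eq_abs, add_zero, abs_mul]
    calc |clamp (x t i) - p t| * |lam (x t) i + mu (x t) i|
        ≤ |x t i - p t| * (Clam + Cmu) :=
          mul_le_mul hcl hlm (abs_nonneg _) (abs_nonneg _)
      _ = (Clam + Cmu) * |p t - x t i| := by rw [abs_sub_comm]; ring
  have h0 : ‖g 0‖ ≤ 0 := by simp [hg, hpinit, hxinit]
  have := norm_le_gronwallBound_of_norm_deriv_right_le hgcont hgd h0 hbound t2 ⟨ht2, le_refl t2⟩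
  rw [gronwallBound_ε0_δ0] at this
  have hz : p t2 - x t2 i = 0 := norm_le_zero_iff.1 this
  linarith
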